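/- Let Γ be a finite group, Ẏ a Γ-module containing a Γ-submodule Y with Ẏ/Y finite, and let S be a finite Γ-set with distinguished subset Ṡ meeting every orbit exactly once, satisfying: for every σ ∈ Γ there exists v ∈ Ṡ with σv = v. Let Ȳ[S,Ṡ]₀ denote the subgroup of Ȳ[S]₀ := (Ẏ ⊗ Z[S]₀) consisting of elements f with f(w) ∈ Y for all w ∉ Ṡ. Then every element of the quotient Ȳ[S,Ṡ]₀ / I_Γ·Y[S]₀ has a representative supported on Ṡ. -/
import Mathlib


/-- every element of `Ȳ[S,Ṡ]₀ / I_Γ·Y[S]₀` has a representative supported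
on `Ṡ`.  Here `Y ⊆ Ȳ` are `Γ`-modules, `Ṡ ⊆ S` is a set of orbit representatives
(one per orbit) such that every `σ ∈ Γ` fixes some `v ∈ Ṡ`, and `Ȳ[S,Ṡ]₀` consists of
sum-zero `Ȳ`-valued maps taking values in `Y` off `Ṡ`. -/
theorem stmt6
    (Γ S : Type) [Group Γ] [Fintype Γ] [Fintype S] [MulAction Γ S]
    (Ybar : Type) [AddCommGroup Ybar] [DistribMulAction Γ Ybar]
    (Y : AddSubgroup Ybar) (hYstab : ∀ (σ : Γ) (y : Ybar), y ∈ Y → σ • y ∈ Y)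
    (Sdot : Set S)
    (hrep : ∀ w : S, ∃ σ : Γ, σ • w ∈ Sdot)
    (huniq : ∀ v ∈ Sdot, ∀ v' ∈ Sdot, (∃ σ : Γ, σ • v = v') → v = v')
    (hfix : ∀ σ : Γ, ∃ v ∈ Sdot, σ • v = v)
    (f : S → Ybar) (hf0 : ∑ w : S, f w = 0)
    (hfY : ∀ w : S, w ∉ Sdot → f w ∈ Y) :
    ∃ f' : S → Ybar,
      (∑ w : S, f' w = 0) ∧
      (∀ w : S, w ∉ Sdot → f' w = 0) ∧
      (f - f') ∈ AddSubgroup.closure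
        {z : S → Ybar | ∃ (σ : Γ) (g : S → Ybar), (∀ w, g w ∈ Y) ∧ (∑ w : S, g w) = 0 ∧
          z = (fun w => σ • g (σ⁻¹ • w)) - g} := by
  classical
  choose σ hσ using hrep
  choose v hvS hvfix using hfix
  -- auxiliary two-point functions
  set g : S → S → Ybar := fun w x =>
    (if x = w then f w else 0) - (if x = v (σ w) then f w else 0) with hg
  set z : S → (S → Ybar) := fun w => (fun x => σ w • g w ((σ w)⁻¹ • x)) - g w with hz
  set T : Finset S := Finset.univ.filter (fun w => w ∉ Sdot) with hT
  have hmemT : ∀ w : S, w ∈ T ↔ w ∉ Sdot := by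
    intro w; simp [hT]
  -- sum of g w is zero
  have hgsum : ∀ w : S, ∑ x : S, g w x = 0 := by
    intro w
    simp only [hg]
    rw [Finset.sum_sub_distrib]
    simp [Finset.sum_ite_eq' Finset.univ w (fun _ => f w),
      Finset.sum_ite_eq' Finset.univ (v (σ w)) (fun _ => f w)]
  -- values of g w are in Y for w ∉ Sdot
  have hgY : ∀ w : S, w ∉ Sdot → ∀ x : S, g w x ∈ Y := by
    intro w hw x
    have hfw := hfY w hw
    simp only [hg]
    apply sub_mem <;> split <;> simp [hfw, Y.zero_mem]
  -- each z w (for w ∉ Sdot) lies in the generating set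
  have hzset : ∀ w : S, w ∉ Sdot →
      z w ∈ {z : S → Ybar | ∃ (τ : Γ) (g : S → Ybar), (∀ x, g x ∈ Y) ∧ (∑ x : S, g x) = 0 ∧
        z = (fun x => τ • g (τ⁻¹ • x)) - g} := by
    intro w hw
    exact ⟨σ w, g w, hgY w hw, hgsum w, rfl⟩
  -- each z w sums to zero
  have hzsum : ∀ w : S, ∑ x : S, z w x = 0 := by
    intro w
    simp only [hz, Pi.sub_apply]
    rw [Finset.sum_sub_distrib, hgsum]
    have : ∑ x : S, σ w • g w ((σ w)⁻¹ • x) = ∑ x : S, σ w • g w x :=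
      Equiv.sum_comp (MulAction.toPerm ((σ w)⁻¹)) (fun x => σ w • g w x)
    rw [this, ← Finset.smul_sum, hgsum, smul_zero, sub_zero]
  -- value of z t at a point w' ∉ Sdot
  have hzval : ∀ t : S, ∀ w' : S, w' ∉ Sdot →
      z t w' = -(if w' = t then f t else 0) := by
    intro t w' hw'
    have h1 : ¬ (w' = v (σ t)) := fun h => hw' (h ▸ hvS (σ t))
    have h2 : ¬ ((σ t)⁻¹ • w' = t) := by
      intro h
      apply hw'
      have h' := congrArg (fun x => σ t • x) h
      simp only [smul_inv_smul] at h'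
      rw [h']
      exact hσ t
    have h3 : ¬ ((σ t)⁻¹ • w' = v (σ t)) := by
      intro h
      apply hw'
      have h' := congrArg (fun x => σ t • x) h
      simp only [smul_inv_smul, hvfix] at h'
      rw [h']
      exact hvS (σ t)
    simp only [hz, Pi.sub_apply, hg]
    rw [if_neg h2, if_neg h3, if_neg h1]
    simp
  refine ⟨f + ∑ w ∈ T, z w, ?_, ?_, ?_⟩
  · -- sum zero
    simp only [Pi.add_apply, Finset.sum_add_distrib, hf0, zero_add,
      Finset.sum_apply]
    rw [Finset.sum_comm]
    simp [hzsum]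
  · -- vanishing off Sdot
    intro w' hw'
    simp only [Pi.add_apply, Finset.sum_apply]
    have : ∑ t ∈ T, z t w' = - f w' := by
      have : ∀ t ∈ T, z t w' = -(if w' = t then f t else 0) :=
        fun t _ => hzval t w' hw'
      rw [Finset.sum_congr rfl this, Finset.sum_neg_distrib,
        Finset.sum_ite_eq T w' f, if_pos ((hmemT w').mpr hw')]
    rw [this, add_neg_cancel]
  · -- f - f' in the closure
    have : f - (f + ∑ w ∈ T, z w) = -∑ w ∈ T, z w := by
      abel
    rw [this]
    apply neg_mem
    apply sum_mem
    intro t ht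
    exact AddSubgroup.subset_closure (hzset t ((hmemT t).mp ht))
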